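/- Let k ≥ 1 and a₁,...,a_k, b₁,...,b_k be positive integers with gcd(aᵢ, bⱼ) = 1 whenever i ≥ j. For 0 ≤ i ≤ k define nᵢ := a_{i+1}···a_k · b₁···bᵢ. Then gcd(n₀,...,n_k) = 1, S := ⟨n₀,...,n_k⟩ is a numerical semigroup, and its Apéry set with respect to n₀ is Ap(S, n₀) = { Σ_{i=1}^{k} rᵢ nᵢ : 0 ≤ rᵢ < aᵢ }, with every element of this set having a unique such representation; consequently F(S) = -n₀ + Σ_{i=1}^{k} (aᵢ - 1) nᵢ. -/

import Mathlib

/-- The i-th term of a compound sequence: nᵢ = a_{i+1}⋯a_k · b₁⋯bᵢ. -/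
def compoundSeq (a b : ℕ → ℕ) (k i : ℕ) : ℕ :=
  (∏ t ∈ Finset.Icc (i + 1) k, a t) * ∏ t ∈ Finset.Icc 1 i, b t

/-- The semigroup generated by a compound sequence n₀, …, n_k. -/
def compoundSG (a b : ℕ → ℕ) (k : ℕ) : Set ℕ :=
  {m : ℕ | ∃ x : ℕ → ℕ, m = ∑ i ∈ Finset.Icc 0 k, compoundSeq a b k i * x i}

open Finset

lemma Icc_insert_top {m k : ℕ} (h : m ≤ k + 1) :
    Finset.Icc m (k + 1) = insert (k + 1) (Finset.Icc m k) := by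
  ext x; simp [Finset.mem_Icc]; omega

lemma cs_succ (a b : ℕ → ℕ) {k i : ℕ} (h : i ≤ k) :
    compoundSeq a b (k + 1) i = a (k + 1) * compoundSeq a b k i := by
  unfold compoundSeq
  rw [Icc_insert_top (by omega), Finset.prod_insert (by simp)]
  ring

lemma cs_top (a b : ℕ → ℕ) (k : ℕ) :
    compoundSeq a b (k + 1) (k + 1) = b (k + 1) * compoundSeq a b k k := by
  unfold compoundSeq
  rw [Finset.Icc_eq_empty (by omega : ¬ (k+1+1) ≤ (k+1)),
    Finset.Icc_eq_empty (by omega : ¬ (k+1) ≤ k),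
    Icc_insert_top (by omega), Finset.prod_insert (by simp)]
  ring

lemma cs_zero (a b : ℕ → ℕ) (k : ℕ) :
    compoundSeq a b k 0 = ∏ t ∈ Finset.Icc 1 k, a t := by
  simp [compoundSeq]

lemma cs_self (a b : ℕ → ℕ) (k : ℕ) :
    compoundSeq a b k k = ∏ t ∈ Finset.Icc 1 k, b t := by
  simp [compoundSeq, Finset.Icc_eq_empty (by omega : ¬ (k+1) ≤ k)]

lemma lemU (a b : ℕ → ℕ) : ∀ k : ℕ,
    (∀ i ∈ Finset.Icc 1 k, 0 < a i) →
    (∀ i ∈ Finset.Icc 1 k, ∀ j ∈ Finset.Icc 1 k, j ≤ i → Nat.Coprime (a i) (b j)) →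
    ∀ (c c' : ℕ) (r r' : ℕ → ℕ),
    (∀ i ∈ Finset.Icc 1 k, r i < a i) → (∀ i ∈ Finset.Icc 1 k, r' i < a i) →
    c * compoundSeq a b k 0 + ∑ i ∈ Finset.Icc 1 k, r i * compoundSeq a b k i
      = c' * compoundSeq a b k 0 + ∑ i ∈ Finset.Icc 1 k, r' i * compoundSeq a b k i →
    c = c' ∧ ∀ i ∈ Finset.Icc 1 k, r i = r' i := by
  intro k
  induction k with
  | zero =>
    intro _ _ c c' r r' _ _ h
    simp [compoundSeq] at h
    exact ⟨h, by simp⟩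
  | succ k ih =>
    intro hapos hcop c c' r r' hr hr' heq
    have hsub : Finset.Icc 1 k ⊆ Finset.Icc 1 (k + 1) :=
      Finset.Icc_subset_Icc_right (Nat.le_succ k)
    have hApos : 0 < a (k + 1) := hapos (k + 1) (by simp)
    rw [Icc_insert_top (by omega), Finset.sum_insert (by simp),
      Finset.sum_insert (by simp)] at heq
    have hsum : ∀ s : ℕ → ℕ,
        ∑ i ∈ Finset.Icc 1 k, s i * compoundSeq a b (k + 1) i
          = a (k + 1) * ∑ i ∈ Finset.Icc 1 k, s i * compoundSeq a b k i := by
      intro s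
      rw [Finset.mul_sum]
      refine Finset.sum_congr rfl fun i hi => ?_
      rw [cs_succ a b (Finset.mem_Icc.mp hi).2]; ring
    rw [hsum r, hsum r', cs_succ a b (Nat.zero_le k)] at heq
    have heqZ := congrArg (Nat.cast : ℕ → ℤ) heq
    push_cast at heqZ
    have heq' : r (k + 1) * compoundSeq a b (k + 1) (k + 1)
          + a (k + 1) * (c * compoundSeq a b k 0
            + ∑ i ∈ Finset.Icc 1 k, r i * compoundSeq a b k i)
        = r' (k + 1) * compoundSeq a b (k + 1) (k + 1)
          + a (k + 1) * (c' * compoundSeq a b k 0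
            + ∑ i ∈ Finset.Icc 1 k, r' i * compoundSeq a b k i) := by
      have hz : ((r (k + 1) * compoundSeq a b (k + 1) (k + 1)
          + a (k + 1) * (c * compoundSeq a b k 0
            + ∑ i ∈ Finset.Icc 1 k, r i * compoundSeq a b k i) : ℕ) : ℤ)
        = ((r' (k + 1) * compoundSeq a b (k + 1) (k + 1)
          + a (k + 1) * (c' * compoundSeq a b k 0
            + ∑ i ∈ Finset.Icc 1 k, r' i * compoundSeq a b k i) : ℕ) : ℤ) := by
        push_cast
        linear_combination heqZ
      exact Nat.cast_inj.mp hz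
    have hcopAN : Nat.Coprime (a (k + 1)) (compoundSeq a b (k + 1) (k + 1)) := by
      rw [cs_self]
      exact Nat.Coprime.prod_right fun j hj =>
        hcop (k + 1) (by simp) j hj (Finset.mem_Icc.mp hj).2
    have hmod : r (k + 1) ≡ r' (k + 1) [MOD a (k + 1)] := by
      have h1 : r (k + 1) * compoundSeq a b (k + 1) (k + 1)
          ≡ r' (k + 1) * compoundSeq a b (k + 1) (k + 1) [MOD a (k + 1)] := by
        have h2 := congrArg (· % a (k + 1)) heq'
        simpa [Nat.ModEq, Nat.add_mul_mod_self_left] using h2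
      exact Nat.ModEq.cancel_right_of_coprime hcopAN h1
    have hrk : r (k + 1) = r' (k + 1) := by
      have h1 := hmod
      unfold Nat.ModEq at h1
      rwa [Nat.mod_eq_of_lt (hr (k + 1) (by simp)),
        Nat.mod_eq_of_lt (hr' (k + 1) (by simp))] at h1
    rw [hrk] at heq'
    have heq2 : c * compoundSeq a b k 0 + ∑ i ∈ Finset.Icc 1 k, r i * compoundSeq a b k i
        = c' * compoundSeq a b k 0 + ∑ i ∈ Finset.Icc 1 k, r' i * compoundSeq a b k i :=
      Nat.eq_of_mul_eq_mul_left hApos (Nat.add_left_cancel heq')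
    obtain ⟨hc, hrest⟩ := ih (fun i hi => hapos i (hsub hi))
      (fun i hi j hj hij => hcop i (hsub hi) j (hsub hj) hij) c c' r r'
      (fun i hi => hr i (hsub hi)) (fun i hi => hr' i (hsub hi)) heq2
    refine ⟨hc, fun i hi => ?_⟩
    rcases Finset.mem_Icc.mp hi with ⟨h1, h2⟩
    by_cases hik : i = k + 1
    · rw [hik]; exact hrk
    · exact hrest i (Finset.mem_Icc.mpr ⟨h1, by omega⟩)

lemma lemN (a b : ℕ → ℕ) : ∀ k : ℕ, (∀ i ∈ Finset.Icc 1 k, 0 < a i) →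
    ∀ x : ℕ → ℕ, ∃ (c : ℕ) (r : ℕ → ℕ), (∀ i ∈ Finset.Icc 1 k, r i < a i) ∧
      ∑ i ∈ Finset.Icc 0 k, compoundSeq a b k i * x i
        = c * compoundSeq a b k 0 + ∑ i ∈ Finset.Icc 1 k, r i * compoundSeq a b k i := by
  intro k
  induction k with
  | zero =>
    intro _ x
    exact ⟨x 0, fun _ => 0, by simp, by simp [compoundSeq, Nat.mul_comm]⟩
  | succ k ih =>
    intro hapos x
    have hsub : Finset.Icc 1 k ⊆ Finset.Icc 1 (k + 1) :=
      Finset.Icc_subset_Icc_right (Nat.le_succ k)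
    have hApos : 0 < a (k + 1) := hapos (k + 1) (by simp)
    set q := x (k + 1) / a (k + 1) with hq
    set s := x (k + 1) % a (k + 1) with hs
    have hslt : s < a (k + 1) := Nat.mod_lt _ hApos
    have hxk : x (k + 1) = a (k + 1) * q + s := (Nat.div_add_mod _ _).symm
    -- the modified coefficient vector
    set y : ℕ → ℕ := fun i => if i = k then x i + b (k + 1) * q else x i with hy
    obtain ⟨c, r, hrb, hrep⟩ := ih (fun i hi => hapos i (hsub hi)) y
    refine ⟨c, fun i => if i = k + 1 then s else r i, ?_, ?_⟩
    · intro i hi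
      by_cases hik : i = k + 1
      · simpa [hik] using hslt
      · have : i ∈ Finset.Icc 1 k := by
          rcases Finset.mem_Icc.mp hi with ⟨h1, h2⟩
          exact Finset.mem_Icc.mpr ⟨h1, by omega⟩
        simpa [hik] using hrb i this
    · -- main computation
      rw [Icc_insert_top (by omega : (0:ℕ) ≤ k + 1), Finset.sum_insert (by simp),
        Icc_insert_top (by omega : (1:ℕ) ≤ k + 1), Finset.sum_insert (by simp)]
      have e1 : ∑ i ∈ Finset.Icc 0 k, compoundSeq a b (k + 1) i * x i
          = a (k + 1) * ∑ i ∈ Finset.Icc 0 k, compoundSeq a b k i * x i := by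
        rw [Finset.mul_sum]
        refine Finset.sum_congr rfl fun i hi => ?_
        rw [cs_succ a b (Finset.mem_Icc.mp hi).2]; ring
      have e2 : ∑ i ∈ Finset.Icc 1 (k + 1),
            (if i = k + 1 then s else r i) * compoundSeq a b (k + 1) i
          = s * compoundSeq a b (k + 1) (k + 1)
            + a (k + 1) * ∑ i ∈ Finset.Icc 1 k, r i * compoundSeq a b k i := by
        rw [Icc_insert_top (by omega : (1:ℕ) ≤ k + 1), Finset.sum_insert (by simp)]
        simp only [if_pos rfl]
        congr 1
        rw [Finset.mul_sum]
        refine Finset.sum_congr rfl fun i hi => ?_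
        rcases Finset.mem_Icc.mp hi with ⟨h1, h2⟩
        rw [if_neg (by omega), cs_succ a b h2]; ring
      have hsy : ∑ i ∈ Finset.Icc 0 k, compoundSeq a b k i * y i
          = ∑ i ∈ Finset.Icc 0 k, compoundSeq a b k i * x i
            + compoundSeq a b k k * (b (k + 1) * q) := by
        have hterm : ∀ i ∈ Finset.Icc 0 k, compoundSeq a b k i * y i
            = compoundSeq a b k i * x i
              + (if i = k then compoundSeq a b k i * (b (k + 1) * q) else 0) := by
          intro i hi
          by_cases h : i = k
          · subst h; simp [hy]; ring
          · simp [hy, h]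
        rw [Finset.sum_congr rfl hterm, Finset.sum_add_distrib,
          Finset.sum_ite_eq' (Finset.Icc 0 k) k]
        simp
      have hcomb : ∑ i ∈ Finset.Icc 0 k, compoundSeq a b k i * x i
            + compoundSeq a b k k * (b (k + 1) * q)
          = c * compoundSeq a b k 0
            + ∑ i ∈ Finset.Icc 1 k, r i * compoundSeq a b k i := by
        rw [← hsy]; exact hrep
      have htop : compoundSeq a b (k + 1) (k + 1) * x (k + 1)
          = a (k + 1) * (compoundSeq a b k k * (b (k + 1) * q))
            + s * compoundSeq a b (k + 1) (k + 1) := by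
        rw [hxk, cs_top]; ring
      have e3 : ∑ i ∈ Finset.Icc 1 k,
            (if i = k + 1 then s else r i) * compoundSeq a b (k + 1) i
          = a (k + 1) * ∑ i ∈ Finset.Icc 1 k, r i * compoundSeq a b k i := by
        rw [Finset.mul_sum]
        refine Finset.sum_congr rfl fun i hi => ?_
        rcases Finset.mem_Icc.mp hi with ⟨h1, h2⟩
        rw [if_neg (by omega), cs_succ a b h2]; ring
      rw [e1, htop, cs_succ a b (Nat.zero_le k), e3]
      simp only [↓reduceIte]
      have hz := congrArg (Nat.cast : ℕ → ℤ) hcomb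
      push_cast at hz
      zify
      linear_combination (a (k + 1) : ℤ) * hz

lemma lemG (a b : ℕ → ℕ) : ∀ k : ℕ,
    (∀ i ∈ Finset.Icc 1 k, ∀ j ∈ Finset.Icc 1 k, j ≤ i → Nat.Coprime (a i) (b j)) →
    (Finset.Icc 0 k).gcd (compoundSeq a b k) = 1 := by
  intro k
  induction k with
  | zero => intro _; simp [compoundSeq]
  | succ k ih =>
    intro hcop
    have hsub : Finset.Icc 1 k ⊆ Finset.Icc 1 (k + 1) :=
      Finset.Icc_subset_Icc_right (Nat.le_succ k)
    have ih' := ih (fun i hi j hj hij => hcop i (hsub hi) j (hsub hj) hij)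
    rw [Icc_insert_top (by omega : (0:ℕ) ≤ k + 1), Finset.gcd_insert]
    have h1 : (Finset.Icc 0 k).gcd (compoundSeq a b (k + 1))
        = a (k + 1) * (Finset.Icc 0 k).gcd (compoundSeq a b k) := by
      have : (Finset.Icc 0 k).gcd (compoundSeq a b (k + 1))
          = (Finset.Icc 0 k).gcd (fun i => a (k + 1) * compoundSeq a b k i) :=
        Finset.gcd_congr rfl fun i hi => cs_succ a b (Finset.mem_Icc.mp hi).2
      rw [this, Finset.gcd_mul_left]
      simp
    rw [h1, ih', mul_one]
    have hcopAN : Nat.Coprime (a (k + 1)) (compoundSeq a b (k + 1) (k + 1)) := by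
      rw [cs_self]
      exact Nat.Coprime.prod_right fun j hj =>
        hcop (k + 1) (by simp) j hj (Finset.mem_Icc.mp hj).2
    rw [gcd_eq_nat_gcd, Nat.gcd_comm]; exact hcopAN

-- uniqueness modulo n₀
lemma lemU' (a b : ℕ → ℕ) (k : ℕ)
    (hapos : ∀ i ∈ Finset.Icc 1 k, 0 < a i)
    (hcop : ∀ i ∈ Finset.Icc 1 k, ∀ j ∈ Finset.Icc 1 k, j ≤ i → Nat.Coprime (a i) (b j))
    (r r' : ℕ → ℕ)
    (hr : ∀ i ∈ Finset.Icc 1 k, r i < a i) (hr' : ∀ i ∈ Finset.Icc 1 k, r' i < a i)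
    (hmod : (∑ i ∈ Finset.Icc 1 k, r i * compoundSeq a b k i)
      ≡ (∑ i ∈ Finset.Icc 1 k, r' i * compoundSeq a b k i) [MOD compoundSeq a b k 0]) :
    ∀ i ∈ Finset.Icc 1 k, r i = r' i := by
  have aux : ∀ s s' : ℕ → ℕ,
      (∀ i ∈ Finset.Icc 1 k, s i < a i) → (∀ i ∈ Finset.Icc 1 k, s' i < a i) →
      (∑ i ∈ Finset.Icc 1 k, s i * compoundSeq a b k i)
        ≤ (∑ i ∈ Finset.Icc 1 k, s' i * compoundSeq a b k i) →
      (∑ i ∈ Finset.Icc 1 k, s i * compoundSeq a b k i)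
        ≡ (∑ i ∈ Finset.Icc 1 k, s' i * compoundSeq a b k i) [MOD compoundSeq a b k 0] →
      ∀ i ∈ Finset.Icc 1 k, s i = s' i := by
    intro s s' hs hs' hle hm
    obtain ⟨c, hc⟩ := (Nat.modEq_iff_dvd' hle).mp hm
    have heq : 0 * compoundSeq a b k 0 + ∑ i ∈ Finset.Icc 1 k, s' i * compoundSeq a b k i
        = c * compoundSeq a b k 0 + ∑ i ∈ Finset.Icc 1 k, s i * compoundSeq a b k i := by
      rw [zero_mul, zero_add, mul_comm]
      omega
    exact fun i hi => ((lemU a b k hapos hcop 0 c s' s hs' hs heq).2 i hi).symm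
  rcases le_total (∑ i ∈ Finset.Icc 1 k, r i * compoundSeq a b k i)
      (∑ i ∈ Finset.Icc 1 k, r' i * compoundSeq a b k i) with h | h
  · exact aux r r' hr hr' h hmod
  · exact fun i hi => (aux r' r hr' hr h hmod.symm i hi).symm

lemma lemRep (a b : ℕ → ℕ) (k : ℕ)
    (hapos : ∀ i ∈ Finset.Icc 1 k, 0 < a i)
    (hcop : ∀ i ∈ Finset.Icc 1 k, ∀ j ∈ Finset.Icc 1 k, j ≤ i → Nat.Coprime (a i) (b j))
    (m : ℕ) :
    ∃ r : ℕ → ℕ, (∀ i ∈ Finset.Icc 1 k, r i < a i) ∧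
      m ≡ (∑ i ∈ Finset.Icc 1 k, r i * compoundSeq a b k i) [MOD compoundSeq a b k 0] := by
  have hn0 : 0 < compoundSeq a b k 0 := by
    rw [cs_zero]; exact Finset.prod_pos hapos
  haveI : NeZero (compoundSeq a b k 0) := ⟨hn0.ne'⟩
  -- tuples
  set ext : ((i : Fin k) → Fin (a (i.1 + 1))) → ℕ → ℕ :=
    fun r j => if h : 1 ≤ j ∧ j ≤ k then (r ⟨j - 1, by omega⟩ : ℕ) else 0 with hext
  have hextlt : ∀ r, ∀ i ∈ Finset.Icc 1 k, ext r i < a i := by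
    intro r i hi
    rcases Finset.mem_Icc.mp hi with ⟨h1, h2⟩
    have h3 : i - 1 + 1 = i := by omega
    simp only [hext, dif_pos (And.intro h1 h2)]
    exact lt_of_lt_of_eq (r ⟨i - 1, by omega⟩).isLt (congrArg a h3)
  have hexteq : ∀ r i, ext r (i : Fin k).1.succ = 0 → True := fun _ _ _ => trivial
  set φ : ((i : Fin k) → Fin (a (i.1 + 1))) → ZMod (compoundSeq a b k 0) :=
    fun r => ((∑ i ∈ Finset.Icc 1 k, ext r i * compoundSeq a b k i : ℕ) : ZMod (compoundSeq a b k 0)) with hφ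
  have hinj : Function.Injective φ := by
    intro r r' h
    have hmod := (ZMod.natCast_eq_natCast_iff _ _ _).mp h
    have hagree := lemU' a b k hapos hcop (ext r) (ext r') (hextlt r) (hextlt r') hmod
    funext i
    have hmem : i.1 + 1 ∈ Finset.Icc 1 k := Finset.mem_Icc.mpr ⟨by omega, by omega⟩
    have := hagree (i.1 + 1) hmem
    simp only [hext, dif_pos (And.intro (by omega : 1 ≤ i.1 + 1) (by omega : i.1 + 1 ≤ k)),
      Nat.add_sub_cancel] at this
    exact Fin.val_injective (by simpa using this)
  have hcard : Fintype.card ((i : Fin k) → Fin (a (i.1 + 1)))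
      = Fintype.card (ZMod (compoundSeq a b k 0)) := by
    rw [Fintype.card_pi, ZMod.card, cs_zero]
    simp only [Fintype.card_fin]
    rw [Fin.prod_univ_eq_prod_range (fun i => a (i + 1)), ← Finset.Ico_add_one_right_eq_Icc,
      Finset.prod_Ico_eq_prod_range]
    simp [Nat.add_comm]
  have hbij : Function.Bijective φ :=
    (Fintype.bijective_iff_injective_and_card φ).mpr ⟨hinj, hcard⟩
  obtain ⟨r0, hr0⟩ := hbij.2 ((m : ℕ) : ZMod (compoundSeq a b k 0))
  exact ⟨ext r0, hextlt r0, ((ZMod.natCast_eq_natCast_iff _ _ _).mp hr0).symm⟩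

lemma Icc_zero_split (k : ℕ) : Finset.Icc 0 k = insert 0 (Finset.Icc 1 k) := by
  ext x; simp [Finset.mem_Icc]; omega

lemma lemMem (a b : ℕ → ℕ) (k : ℕ) (hapos : ∀ i ∈ Finset.Icc 1 k, 0 < a i) (m : ℕ) :
    m ∈ compoundSG a b k ↔ ∃ (c : ℕ) (r : ℕ → ℕ), (∀ i ∈ Finset.Icc 1 k, r i < a i) ∧
      m = c * compoundSeq a b k 0 + ∑ i ∈ Finset.Icc 1 k, r i * compoundSeq a b k i := by
  constructor
  · rintro ⟨x, hx⟩
    obtain ⟨c, r, hb, he⟩ := lemN a b k hapos x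
    exact ⟨c, r, hb, hx.trans he⟩
  · rintro ⟨c, r, hb, he⟩
    refine ⟨fun i => if i = 0 then c else r i, ?_⟩
    rw [Icc_zero_split, Finset.sum_insert (by simp)]
    simp only [if_pos rfl]
    rw [he, mul_comm]
    congr 1
    refine Finset.sum_congr rfl fun i hi => ?_
    rcases Finset.mem_Icc.mp hi with ⟨h1, _⟩
    rw [if_neg (by omega), mul_comm]

lemma lemCrit (a b : ℕ → ℕ) (k : ℕ)
    (hapos : ∀ i ∈ Finset.Icc 1 k, 0 < a i)
    (hcop : ∀ i ∈ Finset.Icc 1 k, ∀ j ∈ Finset.Icc 1 k, j ≤ i → Nat.Coprime (a i) (b j))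
    (m : ℕ) (r : ℕ → ℕ) (hb : ∀ i ∈ Finset.Icc 1 k, r i < a i)
    (hmod : m ≡ (∑ i ∈ Finset.Icc 1 k, r i * compoundSeq a b k i) [MOD compoundSeq a b k 0]) :
    m ∈ compoundSG a b k ↔ (∑ i ∈ Finset.Icc 1 k, r i * compoundSeq a b k i) ≤ m := by
  constructor
  · intro hmem
    obtain ⟨c, r', hb', he⟩ := (lemMem a b k hapos m).mp hmem
    have hmod2 : (∑ i ∈ Finset.Icc 1 k, r' i * compoundSeq a b k i)
        ≡ (∑ i ∈ Finset.Icc 1 k, r i * compoundSeq a b k i) [MOD compoundSeq a b k 0] := by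
      refine Nat.ModEq.trans ?_ hmod
      unfold Nat.ModEq
      rw [he, Nat.add_comm, Nat.add_mul_mod_self_right]
    have hag := lemU' a b k hapos hcop r' r hb' hb hmod2
    have hsums : ∑ i ∈ Finset.Icc 1 k, r i * compoundSeq a b k i
        = ∑ i ∈ Finset.Icc 1 k, r' i * compoundSeq a b k i :=
      Finset.sum_congr rfl fun i hi => by rw [hag i hi]
    omega
  · intro hle
    obtain ⟨c, hc⟩ := (Nat.modEq_iff_dvd' hle).mp hmod.symm
    exact (lemMem a b k hapos m).mpr ⟨c, r, hb, by rw [mul_comm]; omega⟩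

/-- Compound sequences: gcd(n₀,…,n_k) = 1, the Apéry set of S = ⟨n₀,…,n_k⟩ with respect
to n₀ is {Σ rᵢnᵢ : 0 ≤ rᵢ < aᵢ} with unique representations, and
F(S) = -n₀ + Σ (aᵢ-1)nᵢ. -/
theorem stmt_18 (k : ℕ) (hk : 1 ≤ k) (a b : ℕ → ℕ)
    (hapos : ∀ i ∈ Finset.Icc 1 k, 0 < a i) (hbpos : ∀ i ∈ Finset.Icc 1 k, 0 < b i)
    (hcop : ∀ i ∈ Finset.Icc 1 k, ∀ j ∈ Finset.Icc 1 k, j ≤ i →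
      Nat.Coprime (a i) (b j)) :
    (Finset.Icc 0 k).gcd (compoundSeq a b k) = 1 ∧
    ({s : ℕ | s ∈ compoundSG a b k ∧
        ¬∃ t ∈ compoundSG a b k, s = t + compoundSeq a b k 0} =
      {m : ℕ | ∃ r : ℕ → ℕ, (∀ i ∈ Finset.Icc 1 k, r i < a i) ∧
        m = ∑ i ∈ Finset.Icc 1 k, r i * compoundSeq a b k i}) ∧
    (∀ r r' : ℕ → ℕ,
      (∀ i ∈ Finset.Icc 1 k, r i < a i) → (∀ i ∈ Finset.Icc 1 k, r' i < a i) →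
      (∑ i ∈ Finset.Icc 1 k, r i * compoundSeq a b k i) =
        (∑ i ∈ Finset.Icc 1 k, r' i * compoundSeq a b k i) →
      ∀ i ∈ Finset.Icc 1 k, r i = r' i) ∧
    (∀ F : ℕ, IsGreatest {m : ℕ | m ∉ compoundSG a b k} F →
      F + compoundSeq a b k 0 =
        ∑ i ∈ Finset.Icc 1 k, (a i - 1) * compoundSeq a b k i) := by
  have hn0 : 0 < compoundSeq a b k 0 := by
    rw [cs_zero]; exact Finset.prod_pos hapos
  refine ⟨lemG a b k hcop, ?_, ?_, ?_⟩
  · -- Apéry set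
    ext s
    simp only [Set.mem_setOf_eq]
    constructor
    · rintro ⟨hs, hnot⟩
      obtain ⟨c, r, hb, he⟩ := (lemMem a b k hapos s).mp hs
      rcases Nat.eq_zero_or_pos c with hc | hc
      · exact ⟨r, hb, by simpa [hc] using he⟩
      · exfalso
        apply hnot
        obtain ⟨c', rfl⟩ : ∃ c', c = c' + 1 := ⟨c - 1, by omega⟩
        refine ⟨c' * compoundSeq a b k 0
            + ∑ i ∈ Finset.Icc 1 k, r i * compoundSeq a b k i,
          (lemMem a b k hapos _).mpr ⟨c', r, hb, rfl⟩, ?_⟩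
        rw [he]; ring
    · rintro ⟨r, hb, he⟩
      constructor
      · exact (lemMem a b k hapos s).mpr ⟨0, r, hb, by simpa using he⟩
      · rintro ⟨t, ht, hst⟩
        obtain ⟨c, r', hb', he'⟩ := (lemMem a b k hapos t).mp ht
        have heq : 0 * compoundSeq a b k 0
              + ∑ i ∈ Finset.Icc 1 k, r i * compoundSeq a b k i
            = (c + 1) * compoundSeq a b k 0
              + ∑ i ∈ Finset.Icc 1 k, r' i * compoundSeq a b k i := by
          rw [zero_mul, zero_add, ← he, hst, he']; ring
        have := (lemU a b k hapos hcop 0 (c + 1) r r' hb hb' heq).1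
        omega
  · -- uniqueness
    intro r r' hr hr' heq
    exact (lemU a b k hapos hcop 0 0 r r' hr hr'
      (by simp only [zero_mul, zero_add]; exact heq)).2
  · -- Frobenius number
    intro F hF
    obtain ⟨hFnot, hFub⟩ := hF
    have hbM : ∀ i ∈ Finset.Icc 1 k, (fun i => a i - 1) i < a i := by
      intro i hi; have := hapos i hi; simp; omega
    have hA : ∀ m, m ∉ compoundSG a b k →
        m + compoundSeq a b k 0
          ≤ ∑ i ∈ Finset.Icc 1 k, (a i - 1) * compoundSeq a b k i := by
      intro m hm
      obtain ⟨r, hb, hmod⟩ := lemRep a b k hapos hcop m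
      have hcrit := lemCrit a b k hapos hcop m r hb hmod
      have hlt : m < ∑ i ∈ Finset.Icc 1 k, r i * compoundSeq a b k i := by
        by_contra h
        exact hm (hcrit.mpr (by omega))
      obtain ⟨c, hc⟩ := (Nat.modEq_iff_dvd' (le_of_lt hlt)).mp hmod
      have h2 : compoundSeq a b k 0
          ≤ (∑ i ∈ Finset.Icc 1 k, r i * compoundSeq a b k i) - m :=
        Nat.le_of_dvd (by omega) ⟨c, hc⟩
      have h3 : (∑ i ∈ Finset.Icc 1 k, r i * compoundSeq a b k i)
          ≤ ∑ i ∈ Finset.Icc 1 k, (a i - 1) * compoundSeq a b k i :=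
        Finset.sum_le_sum fun i hi =>
          Nat.mul_le_mul_right _ (by have := hb i hi; omega)
      omega
    have hFM := hA F hFnot
    have hmodM : (∑ i ∈ Finset.Icc 1 k, (a i - 1) * compoundSeq a b k i)
          - compoundSeq a b k 0
        ≡ (∑ i ∈ Finset.Icc 1 k, (fun i => a i - 1) i * compoundSeq a b k i)
          [MOD compoundSeq a b k 0] := by
      simp only []
      refine (Nat.modEq_iff_dvd' (by omega)).mpr ⟨1, by omega⟩
    have hcrit := lemCrit a b k hapos hcop _ (fun i => a i - 1) hbM hmodM
    have hnotin : (∑ i ∈ Finset.Icc 1 k, (a i - 1) * compoundSeq a b k i)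
        - compoundSeq a b k 0 ∉ compoundSG a b k := by
      intro h
      have := hcrit.mp h
      omega
    have hle := hFub hnotin
    omega
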